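/- Fix n ≥ 1 and let G_n be the divisibility graph on {1, 2, ..., n}. A number m ∈ {1, ..., n} is a winning opening move for the first player in Juniper Green on {1, ..., n} (i.e., Win({m}, m) fails in the snake-in-the-box game on G_n) if and only if m lies in D(G_n), i.e., some maximum matching of G_n does not cover m. -/
import Mathlib

/-- `M` is a matching of `G`: a set of edges of `G`, no two of which share a vertex. -/
def IsMatching {V : Type*} (G : SimpleGraph V) (M : Finset (Sym2 V)) : Prop :=
  (∀ e ∈ M, e ∈ G.edgeSet) ∧
  ∀ e ∈ M, ∀ f ∈ M, e ≠ f → ∀ v : V, v ∈ e → v ∉ f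

/-- The vertex `v` is covered by the matching `M`, i.e. it is an endpoint of an edge of `M`. -/
def Covers {V : Type*} (M : Finset (Sym2 V)) (v : V) : Prop := ∃ e ∈ M, v ∈ e

/-- `M` is a maximum matching of `G`: a matching of maximum cardinality among all matchings. -/
def IsMaximumMatching {V : Type*} (G : SimpleGraph V) (M : Finset (Sym2 V)) : Prop :=
  IsMatching G M ∧ ∀ M' : Finset (Sym2 V), IsMatching G M' → M'.card ≤ M.card

/-- The snake-in-the-box winning predicate: `Win G S v` means the player about to move from
the position with visited set `S` and current vertex `v ∈ S` has a winning strategy.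
`Win G S v` holds iff there is `w` adjacent to `v`, not yet visited, with `¬ Win G (insert w S) w`. -/
def Win {V : Type*} [Fintype V] [DecidableEq V] (G : SimpleGraph V) (S : Finset V) (v : V) :
    Prop :=
  ∃ w : V, ∃ _ : G.Adj v w, ∃ _ : w ∉ S, ¬ Win G (insert w S) w
termination_by Sᶜ.card
decreasing_by
  simp only [Finset.compl_insert]
  exact Finset.card_erase_lt_of_mem (Finset.mem_compl.mpr (by assumption))

/-- The divisibility graph on `{1, …, n}`: distinct `i, j` are adjacent iff `i ∣ j` or `j ∣ i`. -/
def divGraph (n : ℕ) : SimpleGraph {m : ℕ // m ∈ Finset.Icc 1 n} :=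
  SimpleGraph.fromRel (fun i j => (i : ℕ) ∣ (j : ℕ) ∨ (j : ℕ) ∣ (i : ℕ))

/-- A matching of `G` all of whose edges avoid the vertex set `A`. -/
def MAvoid {V : Type*} [DecidableEq V] (G : SimpleGraph V) (A : Finset V)
    (M : Finset (Sym2 V)) : Prop :=
  IsMatching G M ∧ ∀ e ∈ M, ∀ x, x ∈ e → x ∉ A

lemma exists_maxMatch {V : Type*} [Fintype V] [DecidableEq V]
    (P : Finset (Sym2 V) → Prop) (h0 : P ∅) :
    ∃ M, P M ∧ ∀ N, P N → N.card ≤ M.card := by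
  classical
  obtain ⟨M, hM, hmax⟩ := Finset.exists_max_image (Finset.univ.filter P) Finset.card
    ⟨∅, by simp [h0]⟩
  exact ⟨M, (Finset.mem_filter.mp hM).2, fun N hN => hmax N (by simp [hN])⟩

lemma matching_empty {V : Type*} (G : SimpleGraph V) : IsMatching G (∅ : Finset (Sym2 V)) :=
  ⟨fun e he => absurd he (Finset.notMem_empty e), fun e he => absurd he (Finset.notMem_empty e)⟩

/-- Key lemma: the mover at `v` with visited set `S` wins iff every maximum matching among
matchings of `G` avoiding `S \ {v}` covers `v`. -/
lemma win_iff {V : Type*} [Fintype V] [DecidableEq V] (G : SimpleGraph V)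
    (S : Finset V) (v : V) (hv : v ∈ S) :
    Win G S v ↔ ∀ M, MAvoid G (S.erase v) M →
      (∀ N, MAvoid G (S.erase v) N → N.card ≤ M.card) → Covers M v := by
  classical
  constructor
  · -- Win → every maximum avoiding matching covers v.  By contradiction: suppose some
    -- maximum matching M avoiding S \ {v} misses v; show ¬Win.
    intro hwin M hM hMmax
    by_contra hcov
    -- M misses v, so M avoids all of S
    have hMS : ∀ e ∈ M, ∀ x, x ∈ e → x ∉ S := by
      intro e he x hx hxS
      rcases eq_or_ne x v with rfl | hne
      · exact hcov ⟨e, he, hx⟩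
      · exact hM.2 e he x hx (Finset.mem_erase.mpr ⟨hne, hxS⟩)
    -- derive a contradiction from Win
    rw [Win] at hwin
    obtain ⟨w, hadj, hwS, hnwin⟩ := hwin
    apply hnwin
    rw [win_iff G (insert w S) w (Finset.mem_insert_self w S)]
    intro N hN hNmax
    have hA' : (insert w S).erase w = S := by
      rw [Finset.erase_insert hwS]
    rw [hA'] at hN hNmax
    -- N is a maximum matching avoiding S; show it covers w
    by_contra hNw
    -- then insert s(v,w) N is a matching avoiding S.erase v of card N.card + 1
    have hvw : s(v, w) ∈ G.edgeSet := G.mem_edgeSet.mpr hadj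
    have hnotmem : s(v, w) ∉ N := fun h => hNw ⟨s(v, w), h, Sym2.mem_mk_right v w⟩
    have hNv : ∀ e ∈ N, v ∉ e := fun e he h => hN.2 e he v h hv
    have hNw' : ∀ e ∈ N, w ∉ e := fun e he h => hNw ⟨e, he, h⟩
    have hbig : MAvoid G (S.erase v) (insert s(v, w) N) := by
      refine ⟨⟨?_, ?_⟩, ?_⟩
      · intro e he
        rcases Finset.mem_insert.mp he with rfl | he'
        · exact hvw
        · exact hN.1.1 e he'
      · intro e he f hf hef x hxe hxf
        rcases Finset.mem_insert.mp he with rfl | he' <;>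
          rcases Finset.mem_insert.mp hf with rfl | hf'
        · exact hef rfl
        · rcases Sym2.mem_iff.mp hxe with rfl | rfl
          · exact hNv f hf' hxf
          · exact hNw' f hf' hxf
        · rcases Sym2.mem_iff.mp hxf with rfl | rfl
          · exact hNv e he' hxe
          · exact hNw' e he' hxe
        · exact hN.1.2 e he' f hf' hef x hxe hxf
      · intro e he x hxe hxA
        rcases Finset.mem_insert.mp he with rfl | he'
        · rcases Sym2.mem_iff.mp hxe with rfl | rfl
          · exact (Finset.notMem_erase x S) hxA
          · exact hwS (Finset.mem_of_mem_erase hxA)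
        · exact hN.2 e he' x hxe (Finset.mem_of_mem_erase hxA)
    have h1 : (insert s(v, w) N).card ≤ M.card := hMmax _ hbig
    have h2 : N.card ≤ M.card :=
      le_trans (Finset.card_le_card (Finset.subset_insert _ _)) h1
    have h3 : M.card ≤ N.card := hNmax M ⟨hM.1, hMS⟩
    rw [Finset.card_insert_of_notMem hnotmem] at h1
    omega
  · -- if every maximum avoiding matching covers v, then Win
    intro H
    obtain ⟨M, hM, hMmax⟩ := exists_maxMatch (MAvoid G (S.erase v))
      ⟨matching_empty G, fun e he => absurd he (Finset.notMem_empty e)⟩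
    obtain ⟨e, heM, hve⟩ := H M hM hMmax
    obtain ⟨w, rfl⟩ := Sym2.mem_iff_exists.mp hve
    have hadj : G.Adj v w := G.mem_edgeSet.mp (hM.1.1 _ heM)
    have hwS : w ∉ S := by
      intro hwS
      exact hM.2 _ heM w (Sym2.mem_mk_right v w)
        (Finset.mem_erase.mpr ⟨fun h => G.irrefl (h ▸ hadj), hwS⟩)
    rw [Win]
    refine ⟨w, hadj, hwS, ?_⟩
    rw [win_iff G (insert w S) w (Finset.mem_insert_self w S)]
    push_neg
    have hA' : (insert w S).erase w = S := Finset.erase_insert hwS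
    rw [hA']
    refine ⟨M.erase s(v, w), ⟨⟨?_, ?_⟩, ?_⟩, ?_, ?_⟩
    · exact fun f hf => hM.1.1 f (Finset.mem_of_mem_erase hf)
    · exact fun f hf g hg => hM.1.2 f (Finset.mem_of_mem_erase hf) g (Finset.mem_of_mem_erase hg)
    · -- edges of M.erase e avoid S (they avoid S.erase v, and avoid v by disjointness with e)
      intro f hf x hxf hxS
      rcases eq_or_ne x v with rfl | hne
      · exact hM.1.2 _ heM f (Finset.mem_of_mem_erase hf)
          (Ne.symm (Finset.ne_of_mem_erase hf)) x hve hxf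
      · exact hM.2 f (Finset.mem_of_mem_erase hf) x hxf (Finset.mem_erase.mpr ⟨hne, hxS⟩)
    · -- maximality over matchings avoiding S
      intro N hN
      have hNA : MAvoid (G) (S.erase v) N :=
        ⟨hN.1, fun f hf x hxf hxA => hN.2 f hf x hxf (Finset.mem_of_mem_erase hxA)⟩
      have hNle : N.card ≤ M.card := hMmax N hNA
      have hNlt : N.card ≠ M.card := by
        intro heq
        have hNmax : ∀ N', MAvoid G (S.erase v) N' → N'.card ≤ N.card :=
          fun N' hN' => heq ▸ hMmax N' hN'
        obtain ⟨f, hfN, hvf⟩ := H N hNA hNmax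
        exact hN.2 f hfN v hvf hv
      have h2 : (M.erase s(v, w)).card = M.card - 1 := Finset.card_erase_of_mem heM
      omega
    · -- M.erase s(v,w) does not cover w
      rintro ⟨f, hf, hwf⟩
      exact hM.1.2 _ heM f (Finset.mem_of_mem_erase hf)
        (Ne.symm (Finset.ne_of_mem_erase hf)) w (Sym2.mem_mk_right v w) hwf
termination_by Sᶜ.card
decreasing_by
  all_goals
    simp only [Finset.compl_insert]
    exact Finset.card_erase_lt_of_mem (Finset.mem_compl.mpr (by assumption))

/-- **Main result.** For `n ≥ 1`, a number `m ∈ {1, …, n}` is a winning opening move in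
Juniper Green on `{1, …, n}` iff `m ∈ D(Gₙ)`: some maximum matching of the divisibility
graph `Gₙ` does not cover `m`. -/
theorem juniperGreen_winning_opening_iff_mem_D (n : ℕ) (hn : 1 ≤ n)
    (m : {k : ℕ // k ∈ Finset.Icc 1 n}) :
    ¬ Win (divGraph n) {m} m ↔
      ∃ M : Finset (Sym2 {k : ℕ // k ∈ Finset.Icc 1 n}),
        IsMaximumMatching (divGraph n) M ∧ ¬ Covers M m := by
  classical
  have hMA : ∀ M, MAvoid (divGraph n) (({m} : Finset _).erase m) M ↔ IsMatching (divGraph n) M := by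
    intro M
    simp only [MAvoid, Finset.erase_singleton, Finset.notMem_empty, not_false_iff,
      imp_true_iff, and_true]
  rw [win_iff (divGraph n) {m} m (Finset.mem_singleton_self m)]
  push_neg
  constructor
  · rintro ⟨M, hM, hMmax, hcov⟩
    exact ⟨M, ⟨(hMA M).mp hM, fun N hN => hMmax N ((hMA N).mpr hN)⟩, hcov⟩
  · rintro ⟨M, ⟨hM, hMmax⟩, hcov⟩
    exact ⟨M, (hMA M).mpr hM, fun N hN => hMmax N ((hMA N).mp hN), hcov⟩
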